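/- Let 0 < τ < min{α, β, |β − α|}. For any word u ∈ Σ_n and any m ∈ ℕ there exists a word v ∈ {1,2}^m such that for every x ∈ Σ beginning with the word uv, one has {S_j(x)} ∉ (0, τ) for all n < j ≤ n + m. -/

import Mathlib

noncomputable def Sab (α β : ℝ) (x : ℕ → Bool) (n : ℕ) : ℝ :=
  ∑ i ∈ Finset.range n, (if x i then α else β)

theorem avoid_interval_lemma
    (α β : ℝ) (hα : α ∈ Set.Ioo (0:ℝ) 1) (hβ : β ∈ Set.Ioo (0:ℝ) 1)
    (hirr : Irrational α ∨ Irrational β)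
    (τ : ℝ) (hτ : 0 < τ) (hτα : τ < α) (hτβ : τ < β) (hτab : τ < |β - α|) :
    ∀ (n : ℕ) (u : Fin n → Bool) (m : ℕ), ∃ v : Fin m → Bool,
      ∀ x : ℕ → Bool, (∀ i : Fin n, x (i : ℕ) = u i) →
        (∀ i : Fin m, x (n + (i : ℕ)) = v i) →
        ∀ j : ℕ, n < j → j ≤ n + m → Int.fract (Sab α β x j) ∉ Set.Ioo 0 τ := by
  classical
  have hab1 : |β - α| < 1 - τ := by
    rcases le_or_gt α β with h | h
    · rw [abs_of_nonneg (by linarith)]; linarith [hβ.2, hα.1]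
    · rw [abs_of_neg (by linarith)]; linarith [hα.2, hβ.1]
  -- key: if adding α lands in (0,τ), adding β does not
  have key : ∀ f : ℝ, Int.fract (f + α) ∈ Set.Ioo (0:ℝ) τ →
      Int.fract (f + β) ∉ Set.Ioo (0:ℝ) τ := by
    intro f ha hb
    set a := Int.fract (f + α) with hadef
    set b := Int.fract (f + β) with hbdef
    have h1 : a - b - (α - β) = (↑⌊f + β⌋ - ↑⌊f + α⌋ : ℝ) := by
      simp only [hadef, hbdef, Int.fract]; ring
    have habs : |a - b| < τ := by
      rw [abs_sub_lt_iff]; constructor <;> [linarith [ha.2, hb.1]; linarith [hb.2, ha.1]]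
    have hk : ((⌊f + β⌋ - ⌊f + α⌋ : ℤ) : ℝ) = 0 := by
      have h2 : |((⌊f + β⌋ - ⌊f + α⌋ : ℤ) : ℝ)| < 1 := by
        push_cast
        rw [← h1]
        have h3 : |α - β| < 1 - τ := by rwa [abs_sub_comm]
        calc |a - b - (α - β)| ≤ |a - b| + |α - β| := abs_sub _ _
          _ < τ + (1 - τ) := by linarith
          _ = 1 := by ring
      have h4 : |(⌊f + β⌋ - ⌊f + α⌋ : ℤ)| < 1 := by exact_mod_cast h2
      have h5 : (⌊f + β⌋ - ⌊f + α⌋ : ℤ) = 0 := by rw [abs_lt] at h4; omega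
      exact_mod_cast h5
    push_cast at hk
    have heq : a - b = α - β := by linarith [h1]
    have : |β - α| < τ := by
      rw [abs_sub_comm, ← heq]; exact habs
    linarith
  intro n u m
  set s0 : ℝ := ∑ i : Fin n, (if u i then α else β) with hs0
  set step : ℝ → ℝ :=
    fun f => if Int.fract (f + α) ∈ Set.Ioo (0:ℝ) τ then f + β else f + α with hstep
  -- step always avoids (0, τ)
  have hstep_avoid : ∀ f : ℝ, Int.fract (step f) ∉ Set.Ioo (0:ℝ) τ := by
    intro f
    by_cases hc : Int.fract (f + α) ∈ Set.Ioo (0:ℝ) τ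
    · simp only [hstep, if_pos hc]; exact key f hc
    · simp only [hstep, if_neg hc]; exact hc
  refine ⟨fun i => if Int.fract (step^[(i : ℕ)] s0 + α) ∈ Set.Ioo (0:ℝ) τ
      then false else true, ?_⟩
  intro x hxu hxv j hj1 hj2
  -- partial sums match the iterates of step
  have hmatch : ∀ k : ℕ, k ≤ m → Sab α β x (n + k) = step^[k] s0 := by
    intro k hk
    induction k with
    | zero =>
      simp only [Nat.add_zero, Function.iterate_zero, id]
      rw [hs0, Sab]
      rw [← Fin.sum_univ_eq_sum_range (fun i => if x i then α else β) n]
      exact Finset.sum_congr rfl (fun i _ => by rw [hxu i])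
    | succ k ih =>
      have hk' : k ≤ m := Nat.le_of_succ_le hk
      have hxk : x (n + k) = if Int.fract (step^[k] s0 + α) ∈ Set.Ioo (0:ℝ) τ
          then false else true := hxv ⟨k, lt_of_lt_of_le (Nat.lt_succ_self k) hk⟩
      rw [Sab, ← Nat.add_assoc, Finset.sum_range_succ]
      have ihs : (∑ i ∈ Finset.range (n + k), if x i then α else β) = step^[k] s0 := ih hk'
      rw [ihs, Function.iterate_succ_apply']
      by_cases hc : Int.fract (step^[k] s0 + α) ∈ Set.Ioo (0:ℝ) τ
      · rw [hxk, if_pos hc]; simp only [hstep, if_pos hc, Bool.false_eq_true, if_false]; exact (if_pos hc).symm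
      · rw [hxk, if_neg hc]; simp only [hstep, if_neg hc, if_true]; exact (if_neg hc).symm
  obtain ⟨k, rfl⟩ : ∃ k, j = n + (k + 1) := by
    refine ⟨j - n - 1, ?_⟩; omega
  have hk : k + 1 ≤ m := by omega
  rw [hmatch (k + 1) hk, Function.iterate_succ_apply']
  exact hstep_avoid _
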